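/- arXiv:2105.02826 — 4 statements merged into one kernel-verified Lean document; each statement's English description precedes it below -/
import Mathlib

section
/- The vector field X = −z ∂_z − (r cos r sin r)/(r + cos r sin r) ∂_r on ℝ³ satisfies the Lie derivative identity L_X α_OT = g · α_OT, where g(r,θ,z) = −cos r (r cos r + sin r)/(r + cos r sin r). -/
open Real

/-- Coefficient vector `(a_r, a_θ, a_z) = (0, r sin r, cos r)` of
`α_OT = cos r dz + r sin r dθ` in cylindrical coordinates `p = (r, θ, z)` on ℝ³. -/
noncomputable def aOT : ℝ × ℝ × ℝ → ℝ × ℝ × ℝ := fun p =>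
  (0, p.1 * Real.sin p.1, Real.cos p.1)

/-- The contact vector field `X = −z ∂_z − (r cos r sin r)/(r + cos r sin r) ∂_r`
in cylindrical coordinates `(r, θ, z)`. -/
noncomputable def Xot : ℝ × ℝ × ℝ → ℝ × ℝ × ℝ := fun p =>
  (-(p.1 * Real.cos p.1 * Real.sin p.1) / (p.1 + Real.cos p.1 * Real.sin p.1), 0, -p.2.2)

/-- The scaling function `g(r) = −cos r (r cos r + sin r)/(r + cos r sin r)`,
extended continuously by `g(0) = −1` at `r = 0`. -/
noncomputable def gOT (r : ℝ) : ℝ :=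
  if r = 0 then -1
  else -(Real.cos r * (r * Real.cos r + Real.sin r)) / (r + Real.cos r * Real.sin r)

def dot3 (u v : ℝ × ℝ × ℝ) : ℝ := u.1 * v.1 + u.2.1 * v.2.1 + u.2.2 * v.2.2

noncomputable def fX (r : ℝ) : ℝ :=
  -(r * Real.cos r * Real.sin r) / (r + Real.cos r * Real.sin r)

lemma Dpos {r : ℝ} (hr : 0 < r) : 0 < r + Real.cos r * Real.sin r := by
  rcases le_or_gt r 1 with h | h
  · have hpi : (3 : ℝ) < Real.pi := Real.pi_gt_three
    have h1 : 0 < Real.sin r := Real.sin_pos_of_pos_of_lt_pi hr (by linarith)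
    have h2 : 0 < Real.cos r := Real.cos_pos_of_mem_Ioo ⟨by linarith, by linarith⟩
    positivity
  · nlinarith [Real.neg_one_le_sin r, Real.sin_le_one r, Real.neg_one_le_cos r,
      Real.cos_le_one r]

lemma Dne {r : ℝ} (hr : r ≠ 0) : r + Real.cos r * Real.sin r ≠ 0 := by
  rcases hr.lt_or_gt with h | h
  · have h2 := Dpos (neg_pos.2 h)
    rw [Real.cos_neg, Real.sin_neg] at h2
    intro hc; nlinarith
  · exact (Dpos h).ne'

lemma fX_zero : fX 0 = 0 := by simp [fX]

lemma fX_diff (r : ℝ) : ∃ c, HasDerivAt fX c r := by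
  rcases eq_or_ne r 0 with rfl | hr
  · refine ⟨-(1/2), ?_⟩
    rw [hasDerivAt_iff_tendsto_slope]
    have hsin : Filter.Tendsto (fun x : ℝ => Real.sin x / x)
        (nhdsWithin 0 {(0:ℝ)}ᶜ) (nhds 1) := by
      have h := Real.hasDerivAt_sin 0
      rw [hasDerivAt_iff_tendsto_slope] at h
      rw [Real.cos_zero] at h
      exact h.congr (fun x => by rw [slope_def_field]; simp)
    have hcos : Filter.Tendsto Real.cos (nhdsWithin (0:ℝ) {(0:ℝ)}ᶜ) (nhds 1) := by
      have := (Real.continuous_cos.tendsto 0)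
      rw [Real.cos_zero] at this
      exact this.mono_left nhdsWithin_le_nhds
    have key : Filter.Tendsto
        (fun x => -(Real.cos x * (Real.sin x / x)) / (1 + Real.cos x * (Real.sin x / x)))
        (nhdsWithin (0:ℝ) {(0:ℝ)}ᶜ) (nhds (-(1/2))) := by
      have hden : Filter.Tendsto (fun x => 1 + Real.cos x * (Real.sin x / x))
          (nhdsWithin (0:ℝ) {(0:ℝ)}ᶜ) (nhds (1 + 1 * 1)) :=
        Filter.Tendsto.add tendsto_const_nhds (hcos.mul hsin)
      have h2 := ((hcos.mul hsin).neg).div hden (by norm_num)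
      have he : (-(1 * 1) / (1 + 1 * 1) : ℝ) = -(1/2) := by norm_num
      rw [he] at h2
      exact h2
    refine Filter.Tendsto.congr' ?_ key
    filter_upwards [self_mem_nhdsWithin] with x hx
    have hx0 : x ≠ 0 := hx
    have hD := Dne hx0
    rw [slope_def_field, fX_zero, fX]
    field_simp
    ring
  · have h1 : HasDerivAt (fun s => -(s * Real.cos s * Real.sin s))
        (-((1 * Real.cos r + r * -Real.sin r) * Real.sin r + r * Real.cos r * Real.cos r)) r :=
      (((hasDerivAt_id r).mul (Real.hasDerivAt_cos r)).mul (Real.hasDerivAt_sin r)).neg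
    have h2 : HasDerivAt (fun s => s + Real.cos s * Real.sin s)
        (1 + (-Real.sin r * Real.sin r + Real.cos r * Real.cos r)) r :=
      (hasDerivAt_id r).add ((Real.hasDerivAt_cos r).mul (Real.hasDerivAt_sin r))
    exact ⟨_, h1.div h2 (Dne hr)⟩

/-- Lie derivative identity `L_X α_OT = g · α_OT`: in coordinates, the Lie derivative of a
1-form `α` along `X` evaluated on a vector `v` is `(Dα(p)[X p])(v) + α(p)(DX(p)[v])`. -/
theorem stmt2 :
    ∀ p v : ℝ × ℝ × ℝ,
      dot3 (fderiv ℝ aOT p (Xot p)) v + dot3 (aOT p) (fderiv ℝ Xot p v)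
        = gOT p.1 * dot3 (aOT p) v := by
  intro p v
  set r := p.1 with hrdef
  -- derivative of aOT
  have hA : HasFDerivAt aOT
      ((0 : ℝ × ℝ × ℝ →L[ℝ] ℝ).prod
        (((1 * Real.sin r + r * Real.cos r) • ContinuousLinearMap.fst ℝ ℝ (ℝ × ℝ)).prod
          ((-Real.sin r) • ContinuousLinearMap.fst ℝ ℝ (ℝ × ℝ)))) p := by
    have h1 : HasFDerivAt (fun _ : ℝ × ℝ × ℝ => (0:ℝ)) (0 : ℝ × ℝ × ℝ →L[ℝ] ℝ) p :=
      hasFDerivAt_const 0 p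
    have h2 : HasFDerivAt ((fun s => s * Real.sin s) ∘ Prod.fst)
        ((1 * Real.sin r + r * Real.cos r) • (ContinuousLinearMap.fst ℝ ℝ (ℝ × ℝ))) p :=
      HasDerivAt.comp_hasFDerivAt p
        ((hasDerivAt_id r).mul (Real.hasDerivAt_sin r)) hasFDerivAt_fst
    have h3 : HasFDerivAt (Real.cos ∘ Prod.fst)
        ((-Real.sin r) • (ContinuousLinearMap.fst ℝ ℝ (ℝ × ℝ))) p :=
      HasDerivAt.comp_hasFDerivAt p (Real.hasDerivAt_cos r) hasFDerivAt_fst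
    exact h1.prodMk (h2.prodMk h3)
  -- derivative of Xot
  obtain ⟨c, hc⟩ := fX_diff r
  have hX : HasFDerivAt Xot
      ((c • ContinuousLinearMap.fst ℝ ℝ (ℝ × ℝ)).prod
        ((0 : ℝ × ℝ × ℝ →L[ℝ] ℝ).prod
          (-((ContinuousLinearMap.snd ℝ ℝ ℝ).comp
              (ContinuousLinearMap.snd ℝ ℝ (ℝ × ℝ)))))) p := by
    have h1 : HasFDerivAt (fX ∘ Prod.fst)
        (c • ContinuousLinearMap.fst ℝ ℝ (ℝ × ℝ)) p :=
      HasDerivAt.comp_hasFDerivAt p hc hasFDerivAt_fst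
    have h2 : HasFDerivAt (fun _ : ℝ × ℝ × ℝ => (0:ℝ)) (0 : ℝ × ℝ × ℝ →L[ℝ] ℝ) p :=
      hasFDerivAt_const 0 p
    have h3 : HasFDerivAt (fun q : ℝ × ℝ × ℝ => -q.2.2)
        (-((ContinuousLinearMap.snd ℝ ℝ ℝ).comp
            (ContinuousLinearMap.snd ℝ ℝ (ℝ × ℝ)))) p :=
      (hasFDerivAt_snd.comp p hasFDerivAt_snd).neg
    exact h1.prodMk (h2.prodMk h3)
  rw [hA.fderiv, hX.fderiv]
  simp only [dot3, aOT, Xot, ContinuousLinearMap.prod_apply, ContinuousLinearMap.smul_apply,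
    ContinuousLinearMap.coe_fst', ContinuousLinearMap.zero_apply, ContinuousLinearMap.neg_apply,
    ContinuousLinearMap.coe_comp', Function.comp_apply, ContinuousLinearMap.coe_snd',
    smul_eq_mul]
  rcases eq_or_ne r 0 with h0 | h0
  · rw [← hrdef, h0]
    simp [gOT]
  · rw [← hrdef, gOT, if_neg h0]
    have hD := Dne h0
    have hsc : Real.sin r ^ 2 + Real.cos r ^ 2 = 1 := Real.sin_sq_add_cos_sq r
    have hD' : r + Real.sin r * Real.cos r ≠ 0 := by rwa [mul_comm] at hD
    field_simp
    linear_combination (r * Real.cos r * v.2.2) * hsc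
end

section
/- The function g(r) = −cos r (r cos r + sin r)/(r + cos r sin r) satisfies g(r) < 0.1 for all r ∈ [0, π + 1]. -/
open Real

/-- The scaling function `g` is everywhere smaller than `0.1` on `[0, π + 1]`. -/
theorem stmt5 : ∀ r ∈ Set.Icc (0 : ℝ) (π + 1), gOT r < 0.1 := by
  intro r hr
  obtain ⟨hr0, hr1⟩ := hr
  have hπ : (3.141592 : ℝ) < π := Real.pi_gt_d6
  rcases eq_or_lt_of_le hr0 with h0 | h0
  · simp [gOT, ← h0]; norm_num
  · rw [gOT, if_neg (ne_of_gt h0)]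
    have hd : 0 < r + Real.cos r * Real.sin r := by
      rcases le_or_gt r 0.5 with h | h
      · have hs : 0 ≤ Real.sin r := Real.sin_nonneg_of_nonneg_of_le_pi hr0 (by linarith)
        have hc : 0 ≤ Real.cos r := Real.cos_nonneg_of_mem_Icc ⟨by linarith, by linarith⟩
        nlinarith [mul_nonneg hc hs]
      · nlinarith [Real.neg_one_le_sin (2 * r), Real.sin_two_mul r]
    rw [div_lt_iff₀ hd]
    rcases le_or_gt r (π / 2) with hA | hA
    · -- 0 < r ≤ π/2 : cos, sin nonneg
      have hs : 0 ≤ Real.sin r := Real.sin_nonneg_of_nonneg_of_le_pi hr0 (by linarith)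
      have hc : 0 ≤ Real.cos r := Real.cos_nonneg_of_mem_Icc ⟨by linarith, hA⟩
      nlinarith [mul_nonneg hc hs, mul_nonneg h0.le (sq_nonneg (Real.cos r))]
    · rcases le_or_gt r 1.74 with hB | hB
      · -- π/2 < r ≤ 1.74
        have hs : 0 ≤ Real.sin r := Real.sin_nonneg_of_nonneg_of_le_pi hr0 (by linarith)
        have hs1 : Real.sin r ≤ 1 := Real.sin_le_one r
        have hc : Real.cos r ≤ 0 :=
          Real.cos_nonpos_of_pi_div_two_le_of_le hA.le (by linarith)
        set x : ℝ := -Real.cos r with hxdef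
        have hx0 : 0 ≤ x := by linarith
        have hx1 : x ≤ 0.17 := by
          have h1 : Real.sin (r - π / 2) < r - π / 2 := Real.sin_lt (by linarith)
          have h2 : Real.sin (r - π / 2) = -Real.cos r := Real.sin_sub_pi_div_two r
          rw [h2] at h1
          simp only [hxdef]
          linarith
        have hcx : Real.cos r = -x := by simp [hxdef]
        rw [hcx]
        have hint1 : 0 ≤ x * (1 - Real.sin r) := mul_nonneg hx0 (by linarith)
        have hint2 : 0 ≤ (r - 1.57) * x ^ 2 := mul_nonneg (by linarith) (sq_nonneg x)
        have hint3 : 0 ≤ (0.17 - x) * (1.1 - 1.57 * (x + 0.17)) :=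
          mul_nonneg (by linarith) (by linarith)
        nlinarith [hint1, hint2, hint3]
      · -- 1.74 < r
        have hsq : Real.sin r ^ 2 ≤ 1 := Real.sin_sq_le_one r
        nlinarith [sq_nonneg (2 * r * Real.cos r + 1.1 * Real.sin r), hsq, hB,
          mul_pos (by linarith : (0:ℝ) < r) (by linarith : (0:ℝ) < r)]
end

section
/- Let F(r,t) be the flow of y' = f(y), f(r) = −(r cos r sin r)/(r + cos r sin r), with F(r,0) = r, and let G(r,t) = ∫₀ᵗ g(F(r,s)) ds where g(r) = −cos r (r cos r + sin r)/(r + cos r sin r). Then G(r,t) < ln(7/6) for all r ∈ [0, π + δ) (δ > 0 small) and all t ≥ 0. -/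
open Real

/-- `f(r) = −(r cos r sin r)/(r + cos r sin r)`. -/
noncomputable def fOT (r : ℝ) : ℝ :=
  -(r * Real.cos r * Real.sin r) / (r + Real.cos r * Real.sin r)

open Set


lemma sin_ge_cubic {x : ℝ} (hx : 0 ≤ x) : x - x^3/6 ≤ sin x := by
  have hd : ∀ t : ℝ, HasDerivAt (fun x : ℝ => sin x - (x - x^3/6))
      (cos t - (1 - t^2/2)) t := by
    intro t
    have h2 : HasDerivAt (fun x : ℝ => x - x^3/6) (1 - t^2/2) t := by
      have := (hasDerivAt_id t).sub ((hasDerivAt_pow 3 t).div_const 6)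
      refine this.congr_deriv ?_
      ring
    exact (Real.hasDerivAt_sin t).sub h2
  have key : MonotoneOn (fun x : ℝ => sin x - (x - x^3/6)) (Ici 0) := by
    apply monotoneOn_of_deriv_nonneg (convex_Ici 0)
    · fun_prop
    · intro t _; exact (hd t).differentiableAt.differentiableWithinAt
    · intro t _
      rw [(hd t).deriv]
      have := Real.one_sub_sq_div_two_le_cos (x := t)
      linarith
  have h0 := key (self_mem_Ici (a := (0:ℝ))) hx hx
  simp only [sin_zero] at h0
  nlinarith [h0]

lemma cos_le_quartic {x : ℝ} (hx : 0 ≤ x) : cos x ≤ 1 - x^2/2 + x^4/24 := by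
  have hd : ∀ t : ℝ, HasDerivAt (fun x : ℝ => (1 - x^2/2 + x^4/24) - cos x)
      (sin t - (t - t^3/6)) t := by
    intro t
    have h2 : HasDerivAt (fun x : ℝ => 1 - x^2/2 + x^4/24) (-(t - t^3/6)) t := by
      have := ((hasDerivAt_const t (1:ℝ)).sub ((hasDerivAt_pow 2 t).div_const 2)).add
        ((hasDerivAt_pow 4 t).div_const 24)
      refine this.congr_deriv ?_
      ring
    have := h2.sub (Real.hasDerivAt_cos t)
    refine this.congr_deriv ?_
    ring
  have key : MonotoneOn (fun x : ℝ => (1 - x^2/2 + x^4/24) - cos x) (Ici 0) := by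
    apply monotoneOn_of_deriv_nonneg (convex_Ici 0)
    · fun_prop
    · intro t _; exact (hd t).differentiableAt.differentiableWithinAt
    · intro t ht
      rw [interior_Ici] at ht
      rw [(hd t).deriv]
      have := sin_ge_cubic (le_of_lt ht)
      linarith
  have h0 := key (self_mem_Ici (a := (0:ℝ))) hx hx
  simp only [cos_zero] at h0
  nlinarith [h0]

lemma xsin_lt {x : ℝ} (h0 : 0 < x) (h1 : x < π) : x * sin x < 7*π/12 := by
  rcases le_or_gt x (π/2) with h | h
  · have : x * sin x ≤ x := by nlinarith [sin_le_one x, (sin_pos_of_pos_of_lt_pi h0 h1)]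
    have hpi : (0:ℝ) < π := pi_pos
    nlinarith
  · set u := x - π/2 with hu
    have hu0 : 0 < u := by simp [hu]; linarith
    have hupi : u < π/2 := by simp [hu]; linarith
    have hsin : sin x = cos u := by
      have := Real.sin_add_pi_div_two (x - π/2)
      rw [show x - π/2 + π/2 = x by ring] at this
      rw [hu]; exact this
    have hq := cos_le_quartic hu0.le
    have hx : x = π/2 + u := by rw [hu]; ring
    have hb : x * sin x ≤ (π/2 + u) * (1 - u^2/2 + u^4/24) := by
      rw [hsin, hx]
      have hxpos : 0 < π/2 + u := by positivity
      nlinarith [hq]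
    have hpl : 3.141592 < π := pi_gt_d6
    have hpu : π < 3.141593 := pi_lt_d6
    have : (π/2 + u) * (1 - u^2/2 + u^4/24) < 7*π/12 := by
      nlinarith [sq_nonneg (u - 0.4581), mul_nonneg (sq_nonneg (u - 0.4581)) hu0.le,
        mul_nonneg (mul_nonneg (sq_nonneg (u - 0.4581)) hu0.le) hu0.le,
        sq_nonneg (u^2 - 0.2099), mul_pos hu0 hu0, sq_nonneg (u-1.5708)]
    linarith

lemma hasDerivAt_xsin (x : ℝ) :
    HasDerivAt (fun x : ℝ => x * sin x) (sin x + x * cos x) x := by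
  have := (hasDerivAt_id x).mul (Real.hasDerivAt_sin x)
  refine this.congr_deriv ?_
  simp [id_eq]

lemma xsin_ge {r : ℝ} (h0 : π/2 ≤ r) (h1 : r ≤ 2.3) : π/2 ≤ r * sin r := by
  set u := r - π/2 with hu
  have hpl : 3.141592 < π := pi_gt_d6
  have hpu : π < 3.141593 := pi_lt_d6
  have hu0 : 0 ≤ u := by simp [hu]; linarith
  have hu1 : u ≤ 0.74 := by rw [hu]; linarith
  have hsin : sin r = cos u := by
    have := Real.sin_add_pi_div_two (r - π/2)
    rw [show r - π/2 + π/2 = r by ring] at this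
    rw [hu]; exact this
  have hq := Real.one_sub_sq_div_two_le_cos (x := u)
  have hr : r = π/2 + u := by rw [hu]; ring
  rw [hsin, hr]
  nlinarith [sq_nonneg u, mul_nonneg hu0 hu0]

lemma deriv_xsin_neg {x : ℝ} (h0 : 2.3 ≤ x) (h1 : x ≤ π) : sin x + x * cos x < 0 := by
  have hpl : 3.141592 < π := pi_gt_d6
  have hpu : π < 3.141593 := pi_lt_d6
  have hc : cos x ≤ cos 2.3 :=
    Real.cos_le_cos_of_nonneg_of_le_pi (by norm_num) h1 h0
  have hc23 : cos 2.3 ≤ -0.6 := by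
    have h1 : cos 2.3 = -cos (π - 2.3) := by rw [Real.cos_pi_sub]; ring
    have h2 : cos (π - 2.3) ≥ 1 - (π - 2.3)^2/2 := Real.one_sub_sq_div_two_le_cos
    have h3 : (π - 2.3)^2 ≤ 0.8416^2 := by nlinarith
    rw [h1]; nlinarith
  have hs : sin x ≤ 1 := sin_le_one x
  have hxc : x * cos x ≤ 2.3 * cos 2.3 := by
    calc x * cos x ≤ x * cos 2.3 := by nlinarith
    _ ≤ 2.3 * cos 2.3 := by nlinarith
  nlinarith

lemma strictAntiOn_xsin₁ : StrictAntiOn (fun x : ℝ => x * sin x) (Icc 2.3 π) := by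
  apply strictAntiOn_of_deriv_neg (convex_Icc _ _)
  · fun_prop
  · intro x hx
    rw [interior_Icc] at hx
    rw [(hasDerivAt_xsin x).deriv]
    exact deriv_xsin_neg hx.1.le hx.2.le

lemma strictAntiOn_xsin₂ : StrictAntiOn (fun x : ℝ => x * sin x) (Icc π (3*π/2)) := by
  apply strictAntiOn_of_deriv_neg (convex_Icc _ _)
  · fun_prop
  · intro x hx
    rw [interior_Icc] at hx
    rw [(hasDerivAt_xsin x).deriv]
    have hsin : sin x < 0 := by
      have h1 : sin (x - π) = -sin x := Real.sin_sub_pi x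
      have h2 : 0 < sin (x - π) :=
        sin_pos_of_pos_of_lt_pi (by linarith [hx.1]) (by linarith [hx.2, pi_pos])
      linarith
    have hcos : cos x < 0 :=
      Real.cos_neg_of_pi_div_two_lt_of_lt (by linarith [hx.1, pi_pos]) (by linarith [hx.2, pi_pos])
    nlinarith [hx.1, pi_pos]

lemma D_pos {x : ℝ} (hx : 0 < x) : 0 < x + cos x * sin x := by
  have h2 : cos x * sin x = sin (2*x) / 2 := by
    rw [Real.sin_two_mul]; ring
  rcases le_or_gt x (1/2) with h | h
  · have : 0 < sin (2*x) := by
      apply sin_pos_of_pos_of_lt_pi (by linarith)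
      linarith [pi_gt_d6]
    rw [h2]; linarith
  · have := Real.neg_one_le_sin (2*x)
    rw [h2]; linarith

lemma cos_sin_abs_le (x : ℝ) : |cos x * sin x| ≤ 1/2 := by
  have h2 : cos x * sin x = sin (2*x) / 2 := by
    rw [Real.sin_two_mul]; ring
  rw [h2, abs_div]
  have h3 := abs_sin_le_one (2*x)
  rw [abs_of_pos (by norm_num : (0:ℝ) < 2)]
  linarith

lemma gOT_abs_le {x : ℝ} (h0 : 0 < x) (h1 : x < 2*π) : |gOT x| ≤ 10 := by
  rw [gOT, if_neg h0.ne']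
  have hD := D_pos h0
  rw [abs_div, abs_of_pos hD, abs_neg, abs_mul]
  rw [div_le_iff₀ hD]
  have hs1 := abs_sin_le_one x
  have hc1 := abs_cos_le_one x
  have habs : |x * cos x + sin x| ≤ x + 1 := by
    calc |x * cos x + sin x| ≤ |x * cos x| + |sin x| := abs_add_le _ _
    _ ≤ x + 1 := by
        rw [abs_mul, abs_of_pos h0]
        nlinarith
  rcases le_or_gt x (π/2) with h | h
  · have hsx : 0 ≤ sin x := sin_nonneg_of_nonneg_of_le_pi h0.le (by linarith [pi_pos])
    have hcx : 0 ≤ cos x := Real.cos_nonneg_of_mem_Icc ⟨by linarith, h⟩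
    have hsl : sin x ≤ x := by linarith [Real.sin_lt h0]
    have hDx : x ≤ x + cos x * sin x := by nlinarith
    have : |x * cos x + sin x| ≤ 2 * x := by
      have hcu := Real.cos_le_one x
      rw [abs_of_nonneg (by nlinarith)]
      nlinarith [mul_le_mul_of_nonneg_left hcu h0.le]
    calc |cos x| * |x * cos x + sin x| ≤ 1 * (2*x) := by
          apply mul_le_mul hc1 this (abs_nonneg _) zero_le_one
    _ ≤ 10 * (x + cos x * sin x) := by nlinarith
  · have hcs := cos_sin_abs_le x
    have hD2 : π/2 - 1/2 ≤ x + cos x * sin x := by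
      have := neg_abs_le (cos x * sin x)
      linarith
    have hpl : 3.141592 < π := pi_gt_d6
    have hpu : π < 3.141593 := pi_lt_d6
    calc |cos x| * |x * cos x + sin x| ≤ 1 * (x + 1) := by
          apply mul_le_mul hc1 habs (abs_nonneg _) zero_le_one
    _ ≤ 10 * (x + cos x * sin x) := by nlinarith [neg_abs_le (cos x * sin x)]

lemma gOT_contAt {x : ℝ} (hx : 0 < x) : ContinuousAt gOT x := by
  have hD := D_pos hx
  have hform : ContinuousAt
      (fun r : ℝ => -(Real.cos r * (r * Real.cos r + Real.sin r)) / (r + Real.cos r * Real.sin r)) x := by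
    exact ContinuousAt.div
      (((continuous_cos.mul ((continuous_id.mul continuous_cos).add continuous_sin)).neg).continuousAt)
      ((continuous_id.add (continuous_cos.mul continuous_sin)).continuousAt) hD.ne'
  apply hform.congr
  filter_upwards [eventually_ne_nhds hx.ne'] with r hr
  rw [gOT, if_neg hr]

lemma hasDerivAt_logphi {y : ℝ → ℝ} {u : ℝ} (hy : HasDerivAt y (fOT (y u)) u)
    (hx : 0 < y u) (hs : Real.sin (y u) ≠ 0) :
    HasDerivAt (fun v => Real.log (y v * Real.sin (y v))) (gOT (y u)) u := by
  set x := y u with hxdef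
  have hφx : x * Real.sin x ≠ 0 := mul_ne_zero hx.ne' hs
  have h1 : HasDerivAt (fun v => y v * Real.sin (y v)) ((Real.sin x + x * Real.cos x) * fOT x) u :=
    (hasDerivAt_xsin x).comp u hy
  have h2 := (Real.hasDerivAt_log hφx).comp u h1
  refine h2.congr_deriv ?_
  have hD := (D_pos hx).ne'
  rw [gOT, if_neg hx.ne', fOT]
  field_simp
  ring

lemma continuous_of_flow {y : ℝ → ℝ} (hy : ∀ t, HasDerivAt y (fOT (y t)) t) :
    Continuous y :=
  Differentiable.continuous (fun t => (hy t).differentiableAt)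

lemma gOT_comp_integrable {y : ℝ → ℝ} (hy : ∀ t, HasDerivAt y (fOT (y t)) t)
    {s : ℝ} (hs : 0 ≤ s) (hmem : ∀ u ∈ Icc (0:ℝ) s, 0 < y u) :
    IntervalIntegrable (fun u => gOT (y u)) MeasureTheory.volume 0 s := by
  apply ContinuousOn.intervalIntegrable
  rw [uIcc_of_le hs]
  intro u hu
  exact ((gOT_contAt (hmem u hu)).comp (continuous_of_flow hy).continuousAt).continuousWithinAt

lemma key_identity {y : ℝ → ℝ} (hy : ∀ t, HasDerivAt y (fOT (y t)) t)
    {s : ℝ} (hs : 0 ≤ s)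
    (hmem : ∀ u ∈ Icc (0:ℝ) s, 0 < y u ∧ Real.sin (y u) ≠ 0) :
    ∫ u in (0:ℝ)..s, gOT (y u)
      = Real.log (y s * Real.sin (y s)) - Real.log (y 0 * Real.sin (y 0)) := by
  apply intervalIntegral.integral_eq_sub_of_hasDerivAt
  · rw [uIcc_of_le hs]
    intro u hu
    exact hasDerivAt_logphi (hy u) (hmem u hu).1 (hmem u hu).2
  · exact gOT_comp_integrable hy hs (fun u hu => (hmem u hu).1)

lemma gOT_nonpos_low {x : ℝ} (h0 : 0 < x) (h1 : x ≤ π/2) : gOT x ≤ 0 := by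
  rw [gOT, if_neg h0.ne']
  apply div_nonpos_of_nonpos_of_nonneg _ (D_pos h0).le
  have hc : 0 ≤ Real.cos x := Real.cos_nonneg_of_mem_Icc ⟨by linarith [pi_pos], h1⟩
  have hsx : 0 ≤ Real.sin x := Real.sin_nonneg_of_nonneg_of_le_pi h0.le (by linarith [pi_pos])
  have hin : 0 ≤ x * Real.cos x + Real.sin x := add_nonneg (mul_nonneg h0.le hc) hsx
  nlinarith [mul_nonneg hc hin]

lemma gOT_nonpos_high {x : ℝ} (h0 : 2.3 ≤ x) (h1 : x ≤ π) : gOT x ≤ 0 := by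
  have h0' : (0:ℝ) < x := by linarith
  rw [gOT, if_neg h0'.ne']
  apply div_nonpos_of_nonpos_of_nonneg _ (D_pos h0').le
  have hc : Real.cos x ≤ 0 := by
    apply Real.cos_nonpos_of_pi_div_two_le_of_le
    · linarith [pi_lt_d6]
    · linarith [pi_pos]
  have hd := deriv_xsin_neg h0 h1
  nlinarith [mul_nonneg (neg_nonneg.2 hc) (neg_nonneg.2 hd.le)]

lemma gOT_nonpos_mid {x : ℝ} (h0 : π ≤ x) (h1 : x < 3*π/2) : gOT x ≤ 0 := by
  have h0' : (0:ℝ) < x := by linarith [pi_pos]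
  rw [gOT, if_neg h0'.ne']
  apply div_nonpos_of_nonpos_of_nonneg _ (D_pos h0').le
  have hsin : Real.sin x ≤ 0 := by
    have h1' : Real.sin (x - π) = -Real.sin x := Real.sin_sub_pi x
    have h2 : 0 ≤ Real.sin (x - π) :=
      Real.sin_nonneg_of_nonneg_of_le_pi (by linarith) (by linarith [pi_pos])
    linarith
  have hcos : Real.cos x ≤ 0 := by
    apply Real.cos_nonpos_of_pi_div_two_le_of_le
    · linarith [pi_pos]
    · linarith [pi_pos]
  have hin : x * Real.cos x + Real.sin x ≤ 0 := by nlinarith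
  nlinarith [mul_nonneg (neg_nonneg.2 hcos) (neg_nonneg.2 hin)]

lemma fOT_bound_zero : ∀ x : ℝ, |x - 0| ≤ 1 → |fOT x| ≤ 3 * |x - 0| := by
  intro x hx
  rw [sub_zero] at hx ⊢
  rcases lt_trichotomy x 0 with h | h | h
  · have h2x : Real.sin (2*x) ≤ 0 := by
      have : (0:ℝ) ≤ Real.sin (-(2*x)) := by
        apply Real.sin_nonneg_of_nonneg_of_le_pi (by linarith)
        rw [abs_le] at hx
        linarith [pi_gt_d6]
      rw [Real.sin_neg] at this
      linarith
    have h2x' : 2*x ≤ Real.sin (2*x) := by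
      have := Real.sin_lt (x := -(2*x)) (by linarith)
      rw [Real.sin_neg] at this
      linarith
    have hcs : Real.cos x * Real.sin x = Real.sin (2*x) / 2 := by
      rw [Real.sin_two_mul]; ring
    have hDneg : x + Real.cos x * Real.sin x ≤ x := by rw [hcs]; linarith
    have hDge : 2*x ≤ x + Real.cos x * Real.sin x := by rw [hcs]; linarith
    rw [fOT, abs_div, abs_neg, abs_mul, abs_mul]
    have hDabs : |x| ≤ |x + Real.cos x * Real.sin x| := by
      rw [abs_of_nonpos h.le, abs_of_nonpos (show x + Real.cos x * Real.sin x ≤ 0 by linarith)]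
      linarith
    have hDne : |x + Real.cos x * Real.sin x| > 0 := by
      rw [abs_of_nonpos (show x + Real.cos x * Real.sin x ≤ 0 by linarith)]; linarith
    rw [div_le_iff₀ hDne]
    have habs2 : |Real.cos x| * |Real.sin x| ≤ |x| := by
      rw [← abs_mul, hcs, abs_div]
      have := abs_sin_le_abs (x := 2*x)
      rw [abs_of_pos (show (0:ℝ) < 2 by norm_num)]
      rw [abs_mul, abs_of_pos (show (0:ℝ) < 2 by norm_num)] at this
      linarith
    nlinarith [abs_nonneg x, abs_nonneg (Real.cos x), abs_nonneg (Real.sin x),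
      mul_le_mul_of_nonneg_left hDabs (abs_nonneg x),
      mul_le_mul_of_nonneg_left habs2 (abs_nonneg x)]
  · simp [fOT, h]
  · have hD := D_pos h
    have h2x : 0 ≤ Real.sin (2*x) := by
      apply Real.sin_nonneg_of_nonneg_of_le_pi (by linarith)
      rw [abs_le] at hx
      linarith [pi_gt_d6]
    have hcs : Real.cos x * Real.sin x = Real.sin (2*x) / 2 := by
      rw [Real.sin_two_mul]; ring
    have hcsnn : 0 ≤ Real.cos x * Real.sin x := by rw [hcs]; linarith
    rw [fOT, abs_div, abs_neg, abs_mul, abs_mul]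
    rw [div_le_iff₀ (by rwa [abs_of_pos hD])]
    rw [abs_of_pos hD, abs_of_pos h]
    have habs2 : |Real.cos x| * |Real.sin x| ≤ x := by
      rw [← abs_mul, hcs, abs_div]
      have := abs_sin_le_abs (x := 2*x)
      rw [abs_of_pos (show (0:ℝ) < 2 by norm_num)]
      rw [abs_mul, abs_of_pos (show (0:ℝ) < 2 by norm_num), abs_of_pos h] at this
      linarith
    nlinarith [abs_nonneg (Real.cos x), abs_nonneg (Real.sin x),
      mul_le_mul_of_nonneg_left habs2 h.le]

lemma fOT_bound_pi : ∀ x : ℝ, |x - π| ≤ 1 → |fOT x| ≤ 3 * |x - π| := by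
  intro x hx
  have hpl : 3.141592 < π := pi_gt_d6
  have hpu : π < 3.141593 := pi_lt_d6
  have hxl : π - 1 ≤ x := by rw [abs_le] at hx; linarith
  have hxu : x ≤ π + 1 := by rw [abs_le] at hx; linarith
  have h0 : 0 < x := by linarith
  have hD := D_pos h0
  have hcs := cos_sin_abs_le x
  have hD2 : π - 1.5 ≤ x + Real.cos x * Real.sin x := by
    linarith [neg_abs_le (Real.cos x * Real.sin x)]
  have hsin : |Real.sin x| ≤ |x - π| := by
    have h1 : Real.sin (x - π) = -Real.sin x := Real.sin_sub_pi x
    have h2 : |Real.sin (x - π)| ≤ |x - π| := abs_sin_le_abs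
    rw [h1, abs_neg] at h2
    exact h2
  rw [fOT, abs_div, abs_neg, abs_mul, abs_mul]
  rw [div_le_iff₀ (by rwa [abs_of_pos hD])]
  rw [abs_of_pos hD, abs_of_pos h0]
  have hca : |Real.cos x| ≤ 1 := abs_cos_le_one x
  nlinarith [abs_nonneg (Real.sin x), abs_nonneg (x - π),
    mul_le_mul_of_nonneg_left hsin (le_of_lt h0), abs_nonneg (Real.cos x),
    mul_le_mul_of_nonneg_right hca (abs_nonneg (Real.sin x))]

lemma gOT_pi : gOT π = -1 := by
  rw [gOT, if_neg (ne_of_gt pi_pos)]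
  simp [Real.cos_pi, Real.sin_pi]

lemma gOT_zero : gOT 0 = -1 := by rw [gOT, if_pos rfl]

lemma avoid_gen {y : ℝ → ℝ} (hy : ∀ t, HasDerivAt y (fOT (y t)) t)
    {a b T : ℝ} (ha : 0 ≤ a) (hb : b ≤ 2*π) (hT : 0 ≤ T)
    (hsa : a * Real.sin a = 0) (hsb : b * Real.sin b = 0)
    (hne : ∀ x ∈ Ioo a b, Real.sin x ≠ 0)
    (hy0 : y 0 ∈ Ioo a b) :
    ∀ s ∈ Icc (0:ℝ) T, y s ∈ Ioo a b := by
  have ycont := continuous_of_flow hy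
  by_contra hcon
  push_neg at hcon
  obtain ⟨s₀, hs₀T, hs₀⟩ := hcon
  set K : Set ℝ := Icc 0 T ∩ y ⁻¹' (Iic a ∪ Ici b) with hK
  have hKcl : IsClosed K :=
    isClosed_Icc.inter ((isClosed_Iic.union isClosed_Ici).preimage ycont)
  have hKne : K.Nonempty := by
    refine ⟨s₀, hs₀T, ?_⟩
    simp only [mem_preimage, mem_union, mem_Iic, mem_Ici]
    rcases lt_trichotomy (y s₀) a with h | h | h
    · exact Or.inl h.le
    · exact Or.inl h.le
    · right
      by_contra hh
      push_neg at hh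
      exact hs₀ ⟨h, hh⟩
  have hKbdd : BddBelow K := ⟨0, fun s hs => hs.1.1⟩
  set t₀ := sInf K with ht₀
  have ht₀K : t₀ ∈ K := hKcl.csInf_mem hKne hKbdd
  have ht₀Icc : t₀ ∈ Icc (0:ℝ) T := ht₀K.1
  have ht₀pos : 0 < t₀ := by
    rcases eq_or_lt_of_le ht₀Icc.1 with h | h
    · exfalso
      have := ht₀K.2
      rw [← h] at this
      simp only [mem_preimage, mem_union, mem_Iic, mem_Ici] at this
      rcases this with h' | h'
      · linarith [hy0.1]
      · linarith [hy0.2]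
    · exact h
  have hbefore : ∀ u, 0 ≤ u → u < t₀ → y u ∈ Ioo a b := by
    intro u hu0 hut₀
    by_contra hu
    have huK : u ∈ K := by
      refine ⟨⟨hu0, le_trans hut₀.le ht₀Icc.2⟩, ?_⟩
      simp only [mem_preimage, mem_union, mem_Iic, mem_Ici]
      rcases lt_trichotomy (y u) a with h | h | h
      · exact Or.inl h.le
      · exact Or.inl h.le
      · right
        by_contra hh
        push_neg at hh
        exact hu ⟨h, hh⟩
    exact absurd (csInf_le hKbdd huK) (not_le.2 hut₀)
  -- y t₀ ∈ {a, b}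
  have htend : Filter.Tendsto y (nhdsWithin t₀ (Iio t₀)) (nhds (y t₀)) :=
    (ycont.tendsto t₀).mono_left nhdsWithin_le_nhds
  have hyIcc : y t₀ ∈ Icc a b := by
    refine IsClosed.mem_of_tendsto isClosed_Icc htend ?_
    filter_upwards [Ioo_mem_nhdsLT_of_mem (⟨ht₀pos, le_refl t₀⟩ : t₀ ∈ Ioc 0 t₀)] with u hu
    exact Icc_subset_Icc (le_refl a) (le_refl b) (Ioo_subset_Icc_self (hbefore u hu.1.le hu.2))
  have hφt₀ : y t₀ * Real.sin (y t₀) = 0 := by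
    have := ht₀K.2
    simp only [mem_preimage, mem_union, mem_Iic, mem_Ici] at this
    rcases this with h | h
    · have : y t₀ = a := le_antisymm h hyIcc.1
      rw [this]; exact hsa
    · have : y t₀ = b := le_antisymm hyIcc.2 h
      rw [this]; exact hsb
  -- lower bound for |φ s| before t₀
  have hy0pos : 0 < y 0 := lt_of_le_of_lt ha hy0.1
  have hφ0ne : y 0 * Real.sin (y 0) ≠ 0 := mul_ne_zero hy0pos.ne' (hne _ hy0)
  set ε := |y 0 * Real.sin (y 0)| * Real.exp (-(10 * t₀)) with hε
  have hεpos : 0 < ε := mul_pos (abs_pos.2 hφ0ne) (Real.exp_pos _)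
  have hlow : ∀ s, 0 ≤ s → s < t₀ → ε ≤ |y s * Real.sin (y s)| := by
    intro s hs0 hst₀
    have hmem : ∀ u ∈ Icc (0:ℝ) s, 0 < y u ∧ Real.sin (y u) ≠ 0 := by
      intro u hu
      have hu' := hbefore u hu.1 (lt_of_le_of_lt hu.2 hst₀)
      exact ⟨lt_of_le_of_lt ha hu'.1, hne _ hu'⟩
    have hkey := key_identity hy hs0 hmem
    have hGlb : -(10 * t₀) ≤ ∫ u in (0:ℝ)..s, gOT (y u) := by
      have h1 : ∫ u in (0:ℝ)..s, (-10 : ℝ) ≤ ∫ u in (0:ℝ)..s, gOT (y u) := by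
        apply intervalIntegral.integral_mono_on hs0 intervalIntegrable_const
          (gOT_comp_integrable hy hs0 (fun u hu => (hmem u hu).1))
        intro u hu
        have hu' := hbefore u hu.1 (lt_of_le_of_lt hu.2 hst₀)
        have := gOT_abs_le (lt_of_le_of_lt ha hu'.1) (lt_of_lt_of_le hu'.2 hb)
        linarith [neg_abs_le (gOT (y u))]
      rw [intervalIntegral.integral_const] at h1
      simp only [sub_zero, smul_eq_mul] at h1
      nlinarith
    have hφsne : y s * Real.sin (y s) ≠ 0 :=
      mul_ne_zero (hmem s ⟨hs0, le_refl s⟩).1.ne' (hmem s ⟨hs0, le_refl s⟩).2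
    have habs : |y s * Real.sin (y s)| = |y 0 * Real.sin (y 0)| * Real.exp (∫ u in (0:ℝ)..s, gOT (y u)) := by
      rw [← Real.exp_log_eq_abs hφsne, ← Real.exp_log_eq_abs hφ0ne, ← Real.exp_add]
      congr 1
      linarith [hkey]
    rw [habs, hε]
    apply mul_le_mul_of_nonneg_left _ (abs_nonneg _)
    exact Real.exp_le_exp.2 hGlb
  -- contradiction via continuity
  have htendφ : Filter.Tendsto (fun s => |y s * Real.sin (y s)|)
      (nhdsWithin t₀ (Iio t₀)) (nhds 0) := by
    have : Filter.Tendsto (fun s => |y s * Real.sin (y s)|) (nhds t₀)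
        (nhds |y t₀ * Real.sin (y t₀)|) := by
      apply Filter.Tendsto.abs
      exact ((ycont.mul (Real.continuous_sin.comp ycont)).tendsto t₀)
    rw [hφt₀] at this
    simpa using this.mono_left nhdsWithin_le_nhds
  have hev := htendφ.eventually_lt_const hεpos
  have hev2 := Ioo_mem_nhdsLT_of_mem (⟨ht₀pos, le_refl t₀⟩ : t₀ ∈ Ioc 0 t₀)
  obtain ⟨s, hs1, hs2⟩ := (hev.and (Filter.eventually_of_mem hev2 (fun u hu => hu))).exists
  exact absurd (hlow s hs2.1.le hs2.2) (not_le.2 hs1)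

/-- If `gOT ≤ 0` on `(a, c]` (where the trajectory has positive values and
nonvanishing `sin`), the trajectory starts below `c`, and `|φ(0)| < |c sin c|`,
then the trajectory stays below `c`. -/
lemma barrier_upper {y : ℝ → ℝ} (hy : ∀ t, HasDerivAt y (fOT (y t)) t)
    {a c T : ℝ} (hT : 0 ≤ T) (ha : 0 ≤ a)
    (hmemJ : ∀ s ∈ Icc (0:ℝ) T, a < y s)
    (hsne : ∀ x, a < x → x ≤ c → Real.sin x ≠ 0)
    (hg : ∀ x, a < x → x ≤ c → gOT x ≤ 0)
    (hstart : y 0 < c)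
    (habs : |y 0 * Real.sin (y 0)| < |c * Real.sin c|) :
    ∀ s ∈ Icc (0:ℝ) T, y s < c := by
  have ycont := continuous_of_flow hy
  by_contra hcon
  push_neg at hcon
  obtain ⟨s₀, hs₀T, hs₀⟩ := hcon
  set K : Set ℝ := Icc 0 T ∩ y ⁻¹' (Ici c) with hK
  have hKcl : IsClosed K := isClosed_Icc.inter (isClosed_Ici.preimage ycont)
  have hKne : K.Nonempty := ⟨s₀, hs₀T, hs₀⟩
  have hKbdd : BddBelow K := ⟨0, fun s hs => hs.1.1⟩
  set t₁ := sInf K with ht₁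
  have ht₁K : t₁ ∈ K := hKcl.csInf_mem hKne hKbdd
  have ht₁Icc : t₁ ∈ Icc (0:ℝ) T := ht₁K.1
  have ht₁pos : 0 < t₁ := by
    rcases eq_or_lt_of_le ht₁Icc.1 with h | h
    · exfalso
      have := ht₁K.2
      rw [← h] at this
      exact absurd this (not_le.2 hstart)
    · exact h
  have hbefore : ∀ u, 0 ≤ u → u < t₁ → y u < c := by
    intro u hu0 hut₁
    by_contra hu
    push_neg at hu
    exact absurd (csInf_le hKbdd ⟨⟨hu0, le_trans hut₁.le ht₁Icc.2⟩, hu⟩) (not_le.2 hut₁)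
  have hyt₁ : y t₁ = c := by
    refine le_antisymm ?_ ht₁K.2
    have htend : Filter.Tendsto y (nhdsWithin t₁ (Iio t₁)) (nhds (y t₁)) :=
      (ycont.tendsto t₁).mono_left nhdsWithin_le_nhds
    refine le_of_tendsto htend ?_
    filter_upwards [Ioo_mem_nhdsLT_of_mem (⟨ht₁pos, le_refl t₁⟩ : t₁ ∈ Ioc 0 t₁)] with u hu
    exact (hbefore u hu.1.le hu.2).le
  have hmem : ∀ u ∈ Icc (0:ℝ) t₁, 0 < y u ∧ Real.sin (y u) ≠ 0 := by
    intro u hu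
    have huT : u ∈ Icc (0:ℝ) T := ⟨hu.1, le_trans hu.2 ht₁Icc.2⟩
    have hua := hmemJ u huT
    have huc : y u ≤ c := by
      rcases eq_or_lt_of_le hu.2 with h | h
      · rw [h, hyt₁]
      · exact (hbefore u hu.1 h).le
    exact ⟨lt_of_le_of_lt ha hua, hsne _ hua huc⟩
  have hkey := key_identity hy ht₁Icc.1 hmem
  have hGnp : (∫ u in (0:ℝ)..t₁, gOT (y u)) ≤ 0 := by
    have h1 : ∫ u in (0:ℝ)..t₁, gOT (y u) ≤ ∫ u in (0:ℝ)..t₁, (0:ℝ) := by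
      apply intervalIntegral.integral_mono_on ht₁Icc.1
        (gOT_comp_integrable hy ht₁Icc.1 (fun u hu => (hmem u hu).1)) intervalIntegrable_const
      intro u hu
      have huT : u ∈ Icc (0:ℝ) T := ⟨hu.1, le_trans hu.2 ht₁Icc.2⟩
      have hua := hmemJ u huT
      have huc : y u ≤ c := by
        rcases eq_or_lt_of_le hu.2 with h | h
        · rw [h, hyt₁]
        · exact (hbefore u hu.1 h).le
      exact hg _ hua huc
    simpa using h1
  have hlog : Real.log (y t₁ * Real.sin (y t₁)) ≤ Real.log (y 0 * Real.sin (y 0)) := by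
    linarith [hkey]
  have hφ1ne : y t₁ * Real.sin (y t₁) ≠ 0 :=
    mul_ne_zero (hmem t₁ ⟨ht₁Icc.1, le_refl t₁⟩).1.ne' (hmem t₁ ⟨ht₁Icc.1, le_refl t₁⟩).2
  have hφ0ne : y 0 * Real.sin (y 0) ≠ 0 :=
    mul_ne_zero (hmem 0 ⟨le_refl 0, ht₁Icc.1⟩).1.ne' (hmem 0 ⟨le_refl 0, ht₁Icc.1⟩).2
  have : |y t₁ * Real.sin (y t₁)| ≤ |y 0 * Real.sin (y 0)| := by
    rw [← Real.exp_log_eq_abs hφ1ne, ← Real.exp_log_eq_abs hφ0ne]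
    exact Real.exp_le_exp.2 hlog
  rw [hyt₁] at this
  linarith

lemma barrier_lower {y : ℝ → ℝ} (hy : ∀ t, HasDerivAt y (fOT (y t)) t)
    {b c T : ℝ} (hT : 0 ≤ T) (hc : 0 < c)
    (hmemJ : ∀ s ∈ Icc (0:ℝ) T, y s < b)
    (hsne : ∀ x, c ≤ x → x < b → Real.sin x ≠ 0)
    (hg : ∀ x, c ≤ x → x < b → gOT x ≤ 0)
    (hstart : c < y 0)
    (habs : |y 0 * Real.sin (y 0)| < |c * Real.sin c|) :
    ∀ s ∈ Icc (0:ℝ) T, c < y s := by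
  have ycont := continuous_of_flow hy
  by_contra hcon
  push_neg at hcon
  obtain ⟨s₀, hs₀T, hs₀⟩ := hcon
  set K : Set ℝ := Icc 0 T ∩ y ⁻¹' (Iic c) with hK
  have hKcl : IsClosed K := isClosed_Icc.inter (isClosed_Iic.preimage ycont)
  have hKne : K.Nonempty := ⟨s₀, hs₀T, hs₀⟩
  have hKbdd : BddBelow K := ⟨0, fun s hs => hs.1.1⟩
  set t₁ := sInf K with ht₁
  have ht₁K : t₁ ∈ K := hKcl.csInf_mem hKne hKbdd
  have ht₁Icc : t₁ ∈ Icc (0:ℝ) T := ht₁K.1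
  have ht₁pos : 0 < t₁ := by
    rcases eq_or_lt_of_le ht₁Icc.1 with h | h
    · exfalso
      have := ht₁K.2
      rw [← h] at this
      exact absurd this (not_le.2 hstart)
    · exact h
  have hbefore : ∀ u, 0 ≤ u → u < t₁ → c < y u := by
    intro u hu0 hut₁
    by_contra hu
    push_neg at hu
    exact absurd (csInf_le hKbdd ⟨⟨hu0, le_trans hut₁.le ht₁Icc.2⟩, hu⟩) (not_le.2 hut₁)
  have hyt₁ : y t₁ = c := by
    refine le_antisymm ht₁K.2 ?_
    have htend : Filter.Tendsto y (nhdsWithin t₁ (Iio t₁)) (nhds (y t₁)) :=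
      (ycont.tendsto t₁).mono_left nhdsWithin_le_nhds
    refine ge_of_tendsto htend ?_
    filter_upwards [Ioo_mem_nhdsLT_of_mem (⟨ht₁pos, le_refl t₁⟩ : t₁ ∈ Ioc 0 t₁)] with u hu
    exact (hbefore u hu.1.le hu.2).le
  have hmem : ∀ u ∈ Icc (0:ℝ) t₁, 0 < y u ∧ Real.sin (y u) ≠ 0 := by
    intro u hu
    have huT : u ∈ Icc (0:ℝ) T := ⟨hu.1, le_trans hu.2 ht₁Icc.2⟩
    have hub := hmemJ u huT
    have huc : c ≤ y u := by
      rcases eq_or_lt_of_le hu.2 with h | h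
      · rw [h, hyt₁]
      · exact (hbefore u hu.1 h).le
    exact ⟨lt_of_lt_of_le hc huc, hsne _ huc hub⟩
  have hkey := key_identity hy ht₁Icc.1 hmem
  have hGnp : (∫ u in (0:ℝ)..t₁, gOT (y u)) ≤ 0 := by
    have h1 : ∫ u in (0:ℝ)..t₁, gOT (y u) ≤ ∫ u in (0:ℝ)..t₁, (0:ℝ) := by
      apply intervalIntegral.integral_mono_on ht₁Icc.1
        (gOT_comp_integrable hy ht₁Icc.1 (fun u hu => (hmem u hu).1)) intervalIntegrable_const
      intro u hu
      have huT : u ∈ Icc (0:ℝ) T := ⟨hu.1, le_trans hu.2 ht₁Icc.2⟩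
      have hub := hmemJ u huT
      have huc : c ≤ y u := by
        rcases eq_or_lt_of_le hu.2 with h | h
        · rw [h, hyt₁]
        · exact (hbefore u hu.1 h).le
      exact hg _ huc hub
    simpa using h1
  have hlog : Real.log (y t₁ * Real.sin (y t₁)) ≤ Real.log (y 0 * Real.sin (y 0)) := by
    linarith [hkey]
  have hφ1ne : y t₁ * Real.sin (y t₁) ≠ 0 :=
    mul_ne_zero (hmem t₁ ⟨ht₁Icc.1, le_refl t₁⟩).1.ne' (hmem t₁ ⟨ht₁Icc.1, le_refl t₁⟩).2
  have hφ0ne : y 0 * Real.sin (y 0) ≠ 0 :=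
    mul_ne_zero (hmem 0 ⟨le_refl 0, ht₁Icc.1⟩).1.ne' (hmem 0 ⟨le_refl 0, ht₁Icc.1⟩).2
  have : |y t₁ * Real.sin (y t₁)| ≤ |y 0 * Real.sin (y 0)| := by
    rw [← Real.exp_log_eq_abs hφ1ne, ← Real.exp_log_eq_abs hφ0ne]
    exact Real.exp_le_exp.2 hlog
  rw [hyt₁] at this
  linarith

/-- a fixed point of the flow, via Grönwall. -/
lemma flow_fixed {y : ℝ → ℝ} (hy : ∀ t, HasDerivAt y (fOT (y t)) t)
    {c T : ℝ} (hT : 0 ≤ T) (hy0 : y 0 = c)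
    (hf : ∀ x : ℝ, |x - c| ≤ 1 → |fOT x| ≤ 3 * |x - c|) :
    ∀ s ∈ Icc (0:ℝ) T, y s = c := by
  have ycont := continuous_of_flow hy
  have gron : ∀ b : ℝ, 0 ≤ b → (∀ u ∈ Ico (0:ℝ) b, |y u - c| ≤ 1) →
      ∀ s ∈ Icc (0:ℝ) b, |y s - c| ≤ 0 := by
    intro b hb hbnd s hs
    have h := norm_le_gronwallBound_of_norm_deriv_right_le
      (f := fun t => y t - c) (f' := fun t => fOT (y t)) (δ := 0) (K := 3) (ε := 0)
      (a := 0) (b := b)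
      (by fun_prop)
      (fun t _ => ((hy t).sub_const c).hasDerivWithinAt)
      (by simp [hy0])
      (fun t ht => by
        simp only [Real.norm_eq_abs]
        have := hf (y t) (hbnd t ht)
        linarith)
    have h2 := h s hs
    simp only [Real.norm_eq_abs] at h2
    rwa [gronwallBound_ε0, zero_mul] at h2
  -- first show |y - c| < 1 everywhere on [0, T]
  have claim1 : ∀ s ∈ Icc (0:ℝ) T, |y s - c| < 1 := by
    by_contra hcon
    push_neg at hcon
    obtain ⟨s₀, hs₀T, hs₀⟩ := hcon
    set K : Set ℝ := Icc 0 T ∩ (fun s => |y s - c|) ⁻¹' (Ici 1) with hK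
    have hKcl : IsClosed K := isClosed_Icc.inter
      (isClosed_Ici.preimage (((ycont.sub continuous_const)).abs))
    have hKne : K.Nonempty := ⟨s₀, hs₀T, hs₀⟩
    have hKbdd : BddBelow K := ⟨0, fun s hs => hs.1.1⟩
    set t₁ := sInf K with ht₁
    have ht₁K : t₁ ∈ K := hKcl.csInf_mem hKne hKbdd
    have ht₁pos : 0 < t₁ := by
      rcases eq_or_lt_of_le ht₁K.1.1 with h | h
      · exfalso
        have := ht₁K.2
        rw [← h] at this
        simp only [mem_preimage, mem_Ici] at this
        rw [hy0] at this
        simp at this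
        linarith
      · exact h
    have hbefore : ∀ u, 0 ≤ u → u < t₁ → |y u - c| < 1 := by
      intro u hu0 hut₁
      by_contra hu
      push_neg at hu
      exact absurd (csInf_le hKbdd ⟨⟨hu0, le_trans hut₁.le ht₁K.1.2⟩, hu⟩) (not_le.2 hut₁)
    have := gron t₁ ht₁K.1.1 (fun u hu => (hbefore u hu.1 hu.2).le) t₁ ⟨ht₁K.1.1, le_refl _⟩
    have h2 := ht₁K.2
    simp only [mem_preimage, mem_Ici] at h2
    linarith [abs_nonneg (y t₁ - c)]
  intro s hs
  have := gron T hT (fun u hu => (claim1 u ⟨hu.1, hu.2.le⟩).le) s hs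
  have h0 := abs_nonneg (y s - c)
  have : |y s - c| = 0 := le_antisymm this h0
  have := abs_eq_zero.1 this
  linarith

/-- Let `F(r,·) = y` be the flow of `y' = f(y)` with `y(0) = r`, and
`G(r,t) = ∫₀ᵗ g(F(r,s)) ds`.  Then `G(r,t) < ln(7/6)` for all `r ∈ [0, π + δ)`
(with `0 < δ < π/2` small) and all `t ≥ 0`. -/
theorem stmt11 (δ : ℝ) (hδ : δ ∈ Set.Ioo (0 : ℝ) (π / 2))
    (r : ℝ) (hr : r ∈ Set.Ico (0 : ℝ) (π + δ))
    (y : ℝ → ℝ) (hy0 : y 0 = r) (hy : ∀ t : ℝ, HasDerivAt y (fOT (y t)) t) :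
    ∀ t : ℝ, 0 ≤ t → (∫ s in (0 : ℝ)..t, gOT (y s)) < Real.log (7 / 6) := by
  intro t ht
  have hlog76 : 0 < Real.log (7/6) := Real.log_pos (by norm_num)
  have hpl : 3.141592 < π := pi_gt_d6
  have hpu : π < 3.141593 := pi_lt_d6
  obtain ⟨hδ0, hδπ⟩ := hδ
  obtain ⟨hr0, hrπδ⟩ := hr
  -- a helper for constant trajectories
  have hconst : ∀ c : ℝ, gOT c = -1 → (∀ s ∈ Icc (0:ℝ) t, y s = c) →
      (∫ s in (0:ℝ)..t, gOT (y s)) < Real.log (7/6) := by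
    intro c hgc hc
    have heq : EqOn (fun s => gOT (y s)) (fun _ => (-1:ℝ)) (uIcc 0 t) := by
      rw [uIcc_of_le ht]
      intro s hs
      simp only
      rw [hc s hs, hgc]
    rw [intervalIntegral.integral_congr heq, intervalIntegral.integral_const]
    simp only [sub_zero, smul_eq_mul, mul_neg_one]
    linarith
  -- helper for integral of nonpositive integrand
  have hnonposInt : (∀ s ∈ Icc (0:ℝ) t, 0 < y s) → (∀ s ∈ Icc (0:ℝ) t, gOT (y s) ≤ 0) →
      (∫ s in (0:ℝ)..t, gOT (y s)) < Real.log (7/6) := by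
    intro hpos hnp
    have h1 : ∫ s in (0:ℝ)..t, gOT (y s) ≤ ∫ s in (0:ℝ)..t, (0:ℝ) := by
      apply intervalIntegral.integral_mono_on ht
        (gOT_comp_integrable hy ht hpos) intervalIntegrable_const hnp
    simp only [intervalIntegral.integral_zero] at h1
    linarith
  rcases eq_or_lt_of_le hr0 with h0 | h0
  · -- r = 0
    exact hconst 0 gOT_zero (flow_fixed hy ht (by rw [hy0, ← h0]) fOT_bound_zero)
  rcases lt_trichotomy r π with hrπ | hrπ | hrπ
  · -- r ∈ (0, π)
    have havoid : ∀ s ∈ Icc (0:ℝ) t, y s ∈ Ioo 0 π := by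
      apply avoid_gen hy (le_refl 0) (by linarith [pi_pos]) ht (by simp) (by simp)
        (fun x hx => (Real.sin_pos_of_pos_of_lt_pi hx.1 hx.2).ne')
      rw [hy0]; exact ⟨h0, hrπ⟩
    rcases lt_trichotomy r (π/2) with hrh | hrh | hrh
    · -- r ∈ (0, π/2) : barrier at π/2
      have hbar : ∀ s ∈ Icc (0:ℝ) t, y s < π/2 := by
        apply barrier_upper hy ht (le_refl 0) (fun s hs => (havoid s hs).1)
          (fun x hx1 hx2 => (Real.sin_pos_of_pos_of_lt_pi hx1 (by linarith [pi_pos])).ne')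
          (fun x hx1 hx2 => gOT_nonpos_low hx1 hx2)
          (by rw [hy0]; exact hrh)
        -- |r sin r| < |π/2 * sin (π/2)|
        rw [hy0, Real.sin_pi_div_two, mul_one]
        have hs1 : Real.sin r ≤ 1 := Real.sin_le_one r
        have hs0 : 0 < Real.sin r := Real.sin_pos_of_pos_of_lt_pi h0 hrπ
        rw [abs_of_pos (mul_pos h0 hs0), abs_of_pos (by linarith [pi_pos])]
        nlinarith
      apply hnonposInt (fun s hs => (havoid s hs).1)
      intro s hs
      exact gOT_nonpos_low (havoid s hs).1 (hbar s hs).le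
    · -- r = π/2 : direct estimate
      have hkey := key_identity hy ht (fun u hu =>
        ⟨(havoid u hu).1, (Real.sin_pos_of_pos_of_lt_pi (havoid u hu).1 (havoid u hu).2).ne'⟩)
      rw [hkey, hy0]
      have hyt := havoid t ⟨le_refl 0 |>.trans ht, le_refl t⟩
      have hφt : 0 < y t * Real.sin (y t) :=
        mul_pos hyt.1 (Real.sin_pos_of_pos_of_lt_pi hyt.1 hyt.2)
      have hφtlt : y t * Real.sin (y t) < 7*π/12 := xsin_lt hyt.1 hyt.2
      have hφ0 : r * Real.sin r = π/2 := by rw [hrh, Real.sin_pi_div_two, mul_one]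
      rw [hφ0]
      have h76 : Real.log (y t * Real.sin (y t)) < Real.log (7/6 * (π/2)) := by
        apply Real.log_lt_log hφt
        calc y t * Real.sin (y t) < 7*π/12 := hφtlt
        _ = 7/6 * (π/2) := by ring
      have hsplit : Real.log (7/6 * (π/2)) = Real.log (7/6) + Real.log (π/2) :=
        Real.log_mul (by norm_num) (by positivity)
      linarith
    rcases le_or_gt r 2.3 with hr23 | hr23
    · -- r ∈ (π/2, 2.3]
      have hkey := key_identity hy ht (fun u hu =>
        ⟨(havoid u hu).1, (Real.sin_pos_of_pos_of_lt_pi (havoid u hu).1 (havoid u hu).2).ne'⟩)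
      rw [hkey, hy0]
      have hyt := havoid t ⟨le_refl 0 |>.trans ht, le_refl t⟩
      have hφt : 0 < y t * Real.sin (y t) :=
        mul_pos hyt.1 (Real.sin_pos_of_pos_of_lt_pi hyt.1 hyt.2)
      have hφtlt : y t * Real.sin (y t) < 7*π/12 := xsin_lt hyt.1 hyt.2
      have hφ0 : π/2 ≤ r * Real.sin r := xsin_ge hrh.le hr23
      have hφ0pos : 0 < r * Real.sin r := by linarith [pi_pos]
      have h76 : Real.log (y t * Real.sin (y t)) < Real.log (7/6 * (r * Real.sin r)) := by
        apply Real.log_lt_log hφt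
        calc y t * Real.sin (y t) < 7*π/12 := hφtlt
        _ = 7/6 * (π/2) := by ring
        _ ≤ 7/6 * (r * Real.sin r) := by linarith
      have hsplit : Real.log (7/6 * (r * Real.sin r)) = Real.log (7/6) + Real.log (r * Real.sin r) :=
        Real.log_mul (by norm_num) hφ0pos.ne'
      linarith
    · -- r ∈ (2.3, π) : lower barrier at 2.3
      have hbar : ∀ s ∈ Icc (0:ℝ) t, 2.3 < y s := by
        apply barrier_lower hy ht (by norm_num) (fun s hs => (havoid s hs).2)
          (fun x hx1 hx2 => (Real.sin_pos_of_pos_of_lt_pi (by linarith) hx2).ne')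
          (fun x hx1 hx2 => gOT_nonpos_high hx1 hx2.le)
          (by rw [hy0]; exact hr23)
        rw [hy0]
        have h1 : r * Real.sin r < 2.3 * Real.sin 2.3 := by
          have := strictAntiOn_xsin₁
            ⟨le_refl _, by linarith⟩ ⟨hr23.le, hrπ.le⟩ hr23
          simpa using this
        have hs0 : 0 < Real.sin r := Real.sin_pos_of_pos_of_lt_pi h0 hrπ
        have hs23 : 0 < Real.sin 2.3 := Real.sin_pos_of_pos_of_lt_pi (by norm_num) (by linarith)
        rw [abs_of_pos (mul_pos h0 hs0), abs_of_pos (by positivity)]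
        exact h1
      apply hnonposInt (fun s hs => (havoid s hs).1)
      intro s hs
      exact gOT_nonpos_high (hbar s hs).le (havoid s hs).2.le
  · -- r = π
    exact hconst π gOT_pi (flow_fixed hy ht (by rw [hy0, hrπ]) fOT_bound_pi)
  · -- r ∈ (π, π + δ)
    have hr2π : r < 3*π/2 := by linarith
    have hsinr : Real.sin r < 0 := by
      have h1 : Real.sin (r - π) = -Real.sin r := Real.sin_sub_pi r
      have h2 : 0 < Real.sin (r - π) :=
        Real.sin_pos_of_pos_of_lt_pi (by linarith) (by linarith [pi_pos])
      linarith
    have havoid : ∀ s ∈ Icc (0:ℝ) t, y s ∈ Ioo π (2*π) := by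
      apply avoid_gen hy (le_of_lt pi_pos) (le_refl _) ht (by simp) (by simp)
        (fun x hx => by
          have h1 : Real.sin (x - π) = -Real.sin x := Real.sin_sub_pi x
          have h2 : 0 < Real.sin (x - π) :=
            Real.sin_pos_of_pos_of_lt_pi (by linarith [hx.1]) (by linarith [hx.2])
          intro hcon
          rw [hcon, neg_zero] at h1
          linarith)
      rw [hy0]; exact ⟨hrπ, by linarith⟩
    -- choose an auxiliary barrier point c₂ ∈ (r, 3π/2) with c₂ sin c₂ > 7/6 (r sin r)
    obtain ⟨c₂, hc₂P, hc₂mem⟩ : ∃ c₂ : ℝ, (7/6 * (r * Real.sin r) < c₂ * Real.sin c₂)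
        ∧ c₂ ∈ Ioo r (3*π/2) := by
      have htend : Filter.Tendsto (fun x : ℝ => x * Real.sin x) (nhdsWithin r (Ioi r))
          (nhds (r * Real.sin r)) :=
        ((continuous_id.mul Real.continuous_sin).tendsto r).mono_left nhdsWithin_le_nhds
      have hlt : 7/6 * (r * Real.sin r) < r * Real.sin r := by
        have hrneg : r * Real.sin r < 0 := mul_neg_of_pos_of_neg (by linarith [pi_pos]) hsinr
        linarith
      have hev1 := htend.eventually_const_lt hlt
      have hev2 : ∀ᶠ x in nhdsWithin r (Ioi r), x ∈ Ioo r (3*π/2) :=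
        Filter.eventually_of_mem (Ioo_mem_nhdsGT_of_mem ⟨le_refl r, hr2π⟩) (fun x hx => hx)
      obtain ⟨c₂, h1, h2⟩ := (hev1.and hev2).exists
      exact ⟨c₂, h1, h2⟩
    have hsinc₂ : Real.sin c₂ < 0 := by
      have h1 : Real.sin (c₂ - π) = -Real.sin c₂ := Real.sin_sub_pi c₂
      have h2 : 0 < Real.sin (c₂ - π) :=
        Real.sin_pos_of_pos_of_lt_pi (by linarith [hc₂mem.1]) (by linarith [hc₂mem.2])
      linarith
    have hbar : ∀ s ∈ Icc (0:ℝ) t, y s < c₂ := by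
      apply barrier_upper hy ht pi_pos.le (fun s hs => (havoid s hs).1)
        (fun x hx1 hx2 => by
          have h1 : Real.sin (x - π) = -Real.sin x := Real.sin_sub_pi x
          have h2 : 0 < Real.sin (x - π) :=
            Real.sin_pos_of_pos_of_lt_pi (by linarith) (by linarith [hc₂mem.2])
          intro hcon
          rw [hcon, neg_zero] at h1
          linarith)
        (fun x hx1 hx2 => gOT_nonpos_mid hx1.le (by linarith [hc₂mem.2]))
        (by rw [hy0]; exact hc₂mem.1)
      rw [hy0]
      have h1 : c₂ * Real.sin c₂ < r * Real.sin r := by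
        have := strictAntiOn_xsin₂
          ⟨hrπ.le, hr2π.le⟩ ⟨by linarith [hc₂mem.1], hc₂mem.2.le⟩ hc₂mem.1
        simpa using this
      have hrneg : r * Real.sin r < 0 := mul_neg_of_pos_of_neg (by linarith [pi_pos]) hsinr
      have hc₂neg : c₂ * Real.sin c₂ < 0 := mul_neg_of_pos_of_neg (by linarith [pi_pos, hc₂mem.1]) hsinc₂
      rw [abs_of_neg hrneg, abs_of_neg hc₂neg]
      linarith
    -- conclude via the key identity
    have hkey := key_identity hy ht (fun u hu =>
      ⟨by linarith [(havoid u hu).1, pi_pos], by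
        have hu' := havoid u hu
        have h1 : Real.sin (y u - π) = -Real.sin (y u) := Real.sin_sub_pi (y u)
        have h2 : 0 < Real.sin (y u - π) :=
          Real.sin_pos_of_pos_of_lt_pi (by linarith [hu'.1]) (by linarith [hu'.2])
        intro hcon
        rw [hcon, neg_zero] at h1
        linarith⟩)
    rw [hkey, hy0]
    have hyt := havoid t ⟨ht.trans' (le_refl 0), le_refl t⟩
    have hbart := hbar t ⟨ht.trans' (le_refl 0), le_refl t⟩
    have hsinyt : Real.sin (y t) < 0 := by
      have h1 : Real.sin (y t - π) = -Real.sin (y t) := Real.sin_sub_pi (y t)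
      have h2 : 0 < Real.sin (y t - π) :=
        Real.sin_pos_of_pos_of_lt_pi (by linarith [hyt.1]) (by linarith [hyt.2])
      linarith
    -- y t ∈ (π, c₂), so y t sin y t > c₂ sin c₂ > 7/6 r sin r
    have hmono : c₂ * Real.sin c₂ < y t * Real.sin (y t) := by
      have := strictAntiOn_xsin₂
        ⟨hyt.1.le, by linarith [hc₂mem.2]⟩ ⟨by linarith [hc₂mem.1, hrπ], hc₂mem.2.le⟩ hbart
      simpa using this
    have hφtneg : y t * Real.sin (y t) < 0 := mul_neg_of_pos_of_neg (by linarith [hyt.1, pi_pos]) hsinyt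
    have hφ0neg : r * Real.sin r < 0 := mul_neg_of_pos_of_neg (by linarith [pi_pos]) hsinr
    -- |φ t| < 7/6 |φ 0|
    have habs : -(y t * Real.sin (y t)) < 7/6 * (-(r * Real.sin r)) := by linarith [hc₂P]
    have hlog1 : Real.log (y t * Real.sin (y t)) = Real.log (-(y t * Real.sin (y t))) :=
      (Real.log_neg_eq_log _).symm
    have hlog2 : Real.log (r * Real.sin r) = Real.log (-(r * Real.sin r)) :=
      (Real.log_neg_eq_log _).symm
    rw [hlog1, hlog2]
    have h76 : Real.log (-(y t * Real.sin (y t))) < Real.log (7/6 * (-(r * Real.sin r))) :=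
      Real.log_lt_log (by linarith) habs
    have hsplit : Real.log (7/6 * (-(r * Real.sin r)))
        = Real.log (7/6) + Real.log (-(r * Real.sin r)) :=
      Real.log_mul (by norm_num) (by linarith)
    linarith
end

section
/- For r in [π/2, r_M], the supremum over t ≥ 0 of G(r,t) = ∫₀ᵗ g(F(r,s)) ds equals ln(r_M sin r_M / (r sin r)), attained at the unique time T_r with F(r,T_r) = r_M (interpreted as 0 when r = π/2). -/
open Real

namespace OTaux
open Set Filter Topology

open Set Filter Topology

lemma den_pos {x : ℝ} (hx : 1 < x) : 0 < x + Real.cos x * Real.sin x := by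
  nlinarith [neg_one_le_sin x, sin_le_one x, neg_one_le_cos x, cos_le_one x,
    sin_sq_add_cos_sq x, sq_nonneg (Real.sin x + Real.cos x)]

lemma one_lt_pi_div_two : (1:ℝ) < π / 2 := by nlinarith [pi_gt_three]

lemma fOT_contDiffAt {x : ℝ} (hx : 1 < x) : ContDiffAt ℝ 1 fOT x := by
  have h := den_pos hx
  unfold fOT
  exact ContDiffAt.div
    (((contDiffAt_id.mul Real.contDiff_cos.contDiffAt).mul Real.contDiff_sin.contDiffAt).neg)
    (contDiffAt_id.add (Real.contDiff_cos.contDiffAt.mul Real.contDiff_sin.contDiffAt)) h.ne'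

lemma fOT_pos {x : ℝ} (hx : x ∈ Ioo (π/2) π) : 0 < fOT x := by
  obtain ⟨h1, h2⟩ := hx
  have hd : 0 < x + Real.cos x * Real.sin x := den_pos (one_lt_pi_div_two.trans h1)
  have hc : Real.cos x < 0 := cos_neg_of_pi_div_two_lt_of_lt h1 (by linarith [pi_pos])
  have hs : 0 < Real.sin x := sin_pos_of_pos_of_lt_pi (by linarith [pi_pos]) h2
  have hxpos : 0 < x := by linarith [pi_pos]
  apply div_pos _ hd
  nlinarith [mul_pos (mul_pos hxpos hs) (neg_pos.mpr hc)]

lemma fOT_pi_div_two : fOT (π/2) = 0 := by simp [fOT]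

lemma fOT_pi : fOT π = 0 := by simp [fOT]

lemma flow_eventually_const {y : ℝ → ℝ} (hy : ∀ t, HasDerivAt y (fOT (y t)) t)
    {c t₀ : ℝ} (hc : 1 < c) (hfc : fOT c = 0) (h0 : y t₀ = c) :
    ∀ᶠ t in 𝓝 t₀, y t = c := by
  obtain ⟨K, s, hs, hK⟩ := (fOT_contDiffAt hc).exists_lipschitzOnWith
  have hcont : ContinuousAt y t₀ := (hy t₀).continuousAt
  have hmem : ∀ᶠ t in 𝓝 t₀, y t ∈ s := by
    apply hcont.eventually_mem
    rwa [h0]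
  exact ODE_solution_unique_of_eventually
    (v := fun _ x => fOT x) (s := fun _ => s) (Filter.Eventually.of_forall fun _ => hK)
    (f := y) (g := fun _ => c) (t₀ := t₀)
    (hmem.mono fun t ht => ⟨hy t, ht⟩)
    (Filter.Eventually.of_forall fun t =>
      ⟨by simpa [hfc] using hasDerivAt_const t c, mem_of_mem_nhds hs⟩)
    (by simpa using h0)

lemma flow_const_of_hits {y : ℝ → ℝ} (hy : ∀ t, HasDerivAt y (fOT (y t)) t)
    {c t₀ : ℝ} (hc : 1 < c) (hfc : fOT c = 0) (h0 : y t₀ = c) :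
    ∀ t, y t = c := by
  have hycont : Continuous y := continuous_iff_continuousAt.mpr fun t => (hy t).continuousAt
  have hclopen : IsClopen {t | y t = c} := by
    constructor
    · exact isClosed_eq hycont continuous_const
    · rw [isOpen_iff_mem_nhds]
      intro t ht
      exact flow_eventually_const hy hc hfc ht
  have := hclopen.eq_univ ⟨t₀, h0⟩
  intro t
  exact (Set.eq_univ_iff_forall.mp this) t

lemma flow_mem_Ioo {y : ℝ → ℝ} (hy : ∀ t, HasDerivAt y (fOT (y t)) t)
    (hr : y 0 ∈ Ioo (π/2) π) : ∀ t, y t ∈ Ioo (π/2) π := by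
  have hycont : Continuous y := continuous_iff_continuousAt.mpr fun t => (hy t).continuousAt
  have hne1 : ∀ t, y t ≠ π/2 := by
    intro t h
    have := flow_const_of_hits hy one_lt_pi_div_two fOT_pi_div_two h 0
    exact absurd this (ne_of_gt hr.1)
  have hne2 : ∀ t, y t ≠ π := by
    intro t h
    have := flow_const_of_hits hy (one_lt_pi_div_two.trans (by linarith [pi_pos])) fOT_pi h 0
    exact absurd this (ne_of_lt hr.2)
  have hU : {t | y t ∈ Ioo (π/2) π} = y ⁻¹' Icc (π/2) π := by
    ext t
    simp only [mem_setOf_eq, mem_preimage, mem_Ioo, mem_Icc]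
    constructor
    · rintro ⟨h1, h2⟩; exact ⟨h1.le, h2.le⟩
    · rintro ⟨h1, h2⟩
      exact ⟨lt_of_le_of_ne h1 (Ne.symm (hne1 t)), lt_of_le_of_ne h2 (hne2 t)⟩
  have hclopen : IsClopen {t | y t ∈ Ioo (π/2) π} := by
    constructor
    · rw [hU]; exact isClosed_Icc.preimage hycont
    · exact isOpen_Ioo.preimage hycont
  have := hclopen.eq_univ ⟨0, hr⟩
  intro t
  exact (Set.eq_univ_iff_forall.mp this) t

/-- `ψ = x cos x + sin x` is strictly decreasing on `[π/2, π]`. -/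
lemma psi_strictAnti : StrictAntiOn (fun x : ℝ => x * Real.cos x + Real.sin x) (Icc (π/2) π) := by
  have hder : ∀ x : ℝ, HasDerivAt (fun x : ℝ => x * Real.cos x + Real.sin x)
      (2 * Real.cos x - x * Real.sin x) x := by
    intro x
    have h1 : HasDerivAt (fun x : ℝ => x * Real.cos x)
        (1 * Real.cos x + x * (-Real.sin x)) x :=
      (hasDerivAt_id x).mul (Real.hasDerivAt_cos x)
    have : HasDerivAt (fun x : ℝ => x * Real.cos x + Real.sin x)
        (1 * Real.cos x + x * (-Real.sin x) + Real.cos x) x := h1.add (Real.hasDerivAt_sin x)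
    convert this using 1
    ring
  apply strictAntiOn_of_deriv_neg (convex_Icc _ _)
  · exact (Continuous.continuousOn (by continuity))
  · intro x hx
    rw [interior_Icc] at hx
    obtain ⟨hx1, hx2⟩ := hx
    rw [(hder x).deriv]
    have hc : Real.cos x < 0 := cos_neg_of_pi_div_two_lt_of_lt hx1 (by linarith [pi_pos])
    have hs : 0 < Real.sin x := sin_pos_of_pos_of_lt_pi (by linarith [pi_pos]) hx2
    have hxpos : 0 < x := by linarith [pi_pos]
    nlinarith [mul_pos hxpos hs]

lemma xsinx_le {rM : ℝ} (hrM : rM ∈ Ioo (π/2) π)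
    (hroot : rM * Real.cos rM + Real.sin rM = 0) :
    ∀ x ∈ Icc (π/2) π, x * Real.sin x ≤ rM * Real.sin rM := by
  have hder : ∀ x : ℝ, HasDerivAt (fun x : ℝ => x * Real.sin x)
      (x * Real.cos x + Real.sin x) x := by
    intro x
    have h1 : HasDerivAt (fun x : ℝ => x * Real.sin x)
        (1 * Real.sin x + x * Real.cos x) x :=
      (hasDerivAt_id x).mul (Real.hasDerivAt_sin x)
    convert h1 using 1
    ring
  have hrMIcc : rM ∈ Icc (π/2) π := ⟨hrM.1.le, hrM.2.le⟩
  have hmono : MonotoneOn (fun x : ℝ => x * Real.sin x) (Icc (π/2) rM) := by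
    apply monotoneOn_of_deriv_nonneg (convex_Icc _ _)
      (Continuous.continuousOn (by continuity))
      (fun x _ => ((hder x).differentiableAt).differentiableWithinAt)
    intro x hx
    rw [interior_Icc] at hx
    rw [(hder x).deriv]
    have : (0:ℝ) = rM * Real.cos rM + Real.sin rM := hroot.symm
    have hlt := psi_strictAnti ⟨hx.1.le, hx.2.le.trans hrM.2.le⟩ hrMIcc hx.2
    simp only at hlt
    linarith
  have hanti : AntitoneOn (fun x : ℝ => x * Real.sin x) (Icc rM π) := by
    apply antitoneOn_of_deriv_nonpos (convex_Icc _ _)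
      (Continuous.continuousOn (by continuity))
      (fun x _ => ((hder x).differentiableAt).differentiableWithinAt)
    intro x hx
    rw [interior_Icc] at hx
    rw [(hder x).deriv]
    have hlt := psi_strictAnti hrMIcc ⟨hrM.1.le.trans hx.1.le, hx.2.le⟩ hx.1
    simp only at hlt
    linarith
  intro x hx
  rcases le_total x rM with h | h
  · exact hmono ⟨hx.1, h⟩ ⟨hrM.1.le, le_refl _⟩ h
  · exact hanti ⟨le_refl _, hrM.2.le⟩ ⟨h, hx.2⟩ h



section
variable {y : ℝ → ℝ} (hy : ∀ t, HasDerivAt y (fOT (y t)) t)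
  (hmem : ∀ t, y t ∈ Ioo (π/2) π)

include hy hmem in
lemma phi_hasDerivAt : ∀ t, HasDerivAt (fun t => Real.log (y t * Real.sin (y t))) (gOT (y t)) t := by
  intro t
  obtain ⟨h1, h2⟩ := hmem t
  set u := y t with hu
  have hupos : 0 < u := by linarith [pi_pos]
  have hune : u ≠ 0 := hupos.ne'
  have hs : 0 < Real.sin u := sin_pos_of_pos_of_lt_pi hupos h2
  have hAne : u * Real.sin u ≠ 0 := (mul_pos hupos hs).ne'
  have hd : 0 < u + Real.cos u * Real.sin u := den_pos (one_lt_pi_div_two.trans h1)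
  have hsin : HasDerivAt (fun t => Real.sin (y t)) (Real.cos u * fOT u) t :=
    (Real.hasDerivAt_sin u).comp t (hy t)
  have hA : HasDerivAt (fun t => y t * Real.sin (y t))
      (fOT u * Real.sin u + u * (Real.cos u * fOT u)) t := (hy t).mul hsin
  have hlog := hA.log hAne
  rw [← hu] at hlog
  convert hlog using 1
  rw [gOT, if_neg hune, fOT]
  field_simp
  ring

end

end OTaux

open OTaux in
/-- For `r ∈ [π/2, r_M]`, with `y = F(r,·)` the flow of `y' = f(y)` starting at `r` and
`G(r,t) = ∫₀ᵗ g(F(r,s)) ds`, the supremum of `G(r,t)` over `t ≥ 0` equals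
`ln(r_M sin r_M / (r sin r))`, attained at the unique time `T_r` with `F(r,T_r) = r_M`
(and the supremum is `0`, attained by the constant flow, when `r = π/2`). -/
theorem stmt12 (rM : ℝ) (hrM : rM ∈ Set.Ioo (π / 2) π)
    (hroot : rM * Real.cos rM + Real.sin rM = 0)
    (r : ℝ) (hr : r ∈ Set.Icc (π / 2) rM)
    (y : ℝ → ℝ) (hy0 : y 0 = r) (hy : ∀ t : ℝ, HasDerivAt y (fOT (y t)) t) :
    (r = π / 2 →
      IsGreatest ((fun t : ℝ => ∫ s in (0 : ℝ)..t, gOT (y s)) '' Set.Ici 0) 0) ∧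
    (π / 2 < r →
      ∃ T : ℝ, 0 ≤ T ∧ y T = rM ∧ (∀ T' : ℝ, y T' = rM → T' = T) ∧
        IsGreatest ((fun t : ℝ => ∫ s in (0 : ℝ)..t, gOT (y s)) '' Set.Ici 0)
          (∫ s in (0 : ℝ)..T, gOT (y s)) ∧
        (∫ s in (0 : ℝ)..T, gOT (y s)) =
          Real.log (rM * Real.sin rM / (r * Real.sin r))) := by
  obtain ⟨hrM1, hrM2⟩ := hrM
  obtain ⟨hr1, hr2⟩ := hr
  have hycont : Continuous y := continuous_iff_continuousAt.mpr fun t => (hy t).continuousAt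
  constructor
  · -- case r = π/2 : the flow is constant
    intro hreq
    have hconst : ∀ t, y t = π/2 :=
      flow_const_of_hits hy one_lt_pi_div_two fOT_pi_div_two (by rw [hy0, hreq])
    have hg0 : ∀ s : ℝ, gOT (y s) = 0 := by
      intro s
      rw [hconst s, gOT, if_neg (by positivity)]
      simp
    constructor
    · exact ⟨0, Set.mem_Ici.mpr le_rfl, by simp⟩
    · rintro v ⟨t, _, rfl⟩
      simp [hg0]
  · -- case π/2 < r
    intro hrlt
    have hy0mem : y 0 ∈ Set.Ioo (π/2) π := by
      rw [hy0]; exact ⟨hrlt, lt_of_le_of_lt hr2 hrM2⟩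
    have hmem := flow_mem_Ioo hy hy0mem
    have hSM : StrictMono y :=
      strictMono_of_deriv_pos fun t => by rw [(hy t).deriv]; exact fOT_pos (hmem t)
    -- the integral in closed form
    have hint : ∀ t : ℝ, (∫ s in (0:ℝ)..t, gOT (y s)) =
        Real.log (y t * Real.sin (y t)) - Real.log (r * Real.sin r) := by
      intro t
      have hcontg : Continuous fun s => gOT (y s) := by
        have heq : (fun s => gOT (y s)) = fun s =>
            -(Real.cos (y s) * (y s * Real.cos (y s) + Real.sin (y s))) /
              (y s + Real.cos (y s) * Real.sin (y s)) := by
          funext s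
          rw [gOT, if_neg]
          have := (hmem s).1
          have : (0:ℝ) < y s := by linarith [pi_pos, (hmem s).1, one_lt_pi_div_two]
          exact this.ne'
        rw [heq]
        apply Continuous.div
          (((Real.continuous_cos.comp hycont).mul ((hycont.mul (Real.continuous_cos.comp hycont)).add (Real.continuous_sin.comp hycont))).neg)
          (hycont.add ((Real.continuous_cos.comp hycont).mul (Real.continuous_sin.comp hycont)))
        intro s
        exact (den_pos (one_lt_pi_div_two.trans (hmem s).1)).ne'
      have := intervalIntegral.integral_eq_sub_of_hasDerivAt
        (f := fun t => Real.log (y t * Real.sin (y t)))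
        (fun s _ => phi_hasDerivAt hy hmem s)
        (hcontg.intervalIntegrable 0 t)
      rw [this]
      simp only [hy0]
    -- existence of a time t₁ with rM ≤ y t₁
    have hex : ∃ t : ℝ, 0 ≤ t ∧ rM ≤ y t := by
      have hsub : Set.Icc r rM ⊆ Set.Ioo (π/2) π := fun x hx =>
        ⟨lt_of_lt_of_le hrlt hx.1, lt_of_le_of_lt hx.2 hrM2⟩
      have hfc : ContinuousOn fOT (Set.Icc r rM) := fun x hx =>
        ((fOT_contDiffAt (one_lt_pi_div_two.trans (hsub hx).1)).continuousAt).continuousWithinAt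
      obtain ⟨x₀, hx₀mem, hx₀min⟩ :=
        isCompact_Icc.exists_isMinOn ⟨r, le_refl r, hr2⟩ hfc
      have hcpos : 0 < fOT x₀ := fOT_pos (hsub hx₀mem)
      set c := fOT x₀ with hc
      by_contra hcon
      push_neg at hcon
      have hyIcc : ∀ t, 0 ≤ t → y t ∈ Set.Icc r rM := by
        intro t ht
        refine ⟨?_, (hcon t ht).le⟩
        calc r = y 0 := hy0.symm
        _ ≤ y t := hSM.monotone ht
      -- y t - c*t is monotone on [0, ∞)
      have hz : MonotoneOn (fun t => y t - c * t) (Set.Ici 0) := by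
        have hd : ∀ t : ℝ, HasDerivAt (fun t => y t - c * t) (fOT (y t) - c) t := by
          intro t
          have h := (hy t).sub ((hasDerivAt_id t).const_mul c)
          rw [mul_one] at h
          exact h
        apply monotoneOn_of_deriv_nonneg (f := fun t => y t - c * t) (convex_Ici 0)
          (Continuous.continuousOn (hycont.sub (continuous_const.mul continuous_id)))
          (fun t _ => ((hd t).differentiableAt).differentiableWithinAt)
        intro t ht
        rw [interior_Ici] at ht
        rw [(hd t).deriv]
        have := isMinOn_iff.mp hx₀min (y t) (hyIcc t (le_of_lt ht))
        linarith
      set t₁ : ℝ := (rM - r) / c + 1 with ht₁def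
      have ht₁pos : 0 < t₁ := by
        have : 0 ≤ (rM - r)/c := div_nonneg (by linarith) hcpos.le
        rw [ht₁def]; linarith
      have := hz (Set.mem_Ici.mpr le_rfl) (Set.mem_Ici.mpr ht₁pos.le) ht₁pos.le
      simp only [mul_zero, sub_zero] at this
      rw [hy0] at this
      have hyt₁ : r + c * t₁ ≤ y t₁ := by linarith
      have : rM < y t₁ := by
        have hct : c * t₁ = (rM - r) + c := by
          rw [ht₁def]; field_simp
        nlinarith
      exact absurd this (not_lt.mpr (hcon t₁ ht₁pos.le).le)
    obtain ⟨t₁, ht₁0, ht₁⟩ := hex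
    have hivt := intermediate_value_Icc ht₁0 hycont.continuousOn
    obtain ⟨T, hTmem, hTeq⟩ := hivt ⟨by rw [hy0]; exact hr2, ht₁⟩
    have hrspos : 0 < r * Real.sin r := by
      have : 0 < Real.sin r := sin_pos_of_pos_of_lt_pi (by linarith [pi_pos]) (by linarith)
      have : (0:ℝ) < r := by linarith [pi_pos]
      positivity
    have hrMpos : 0 < rM * Real.sin rM := by
      have h1 : 0 < Real.sin rM := sin_pos_of_pos_of_lt_pi (by linarith [pi_pos]) hrM2
      have h2 : (0:ℝ) < rM := by linarith [pi_pos]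
      positivity
    refine ⟨T, hTmem.1, hTeq, ?_, ⟨⟨T, hTmem.1, rfl⟩, ?_⟩, ?_⟩
    · intro T' hT'
      exact hSM.injective (hT'.trans hTeq.symm)
    · rintro v ⟨t, _, rfl⟩
      simp only
      rw [hint t, hint T, hTeq]
      have hb := xsinx_le ⟨hrM1, hrM2⟩ hroot (y t) ⟨(hmem t).1.le, (hmem t).2.le⟩
      have hpos : 0 < y t * Real.sin (y t) := by
        have h1 : 0 < Real.sin (y t) :=
          sin_pos_of_pos_of_lt_pi (by linarith [pi_pos, (hmem t).1, one_lt_pi_div_two]) (hmem t).2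
        have h2 : (0:ℝ) < y t := by linarith [pi_pos, (hmem t).1, one_lt_pi_div_two]
        positivity
      have := Real.log_le_log hpos hb
      linarith
    · rw [hint T, hTeq, Real.log_div hrMpos.ne' hrspos.ne']
end
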